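/- Let X be a metric space, μ a Borel measure on X, and (h_n) a sequence of measurable functions h_n : X → [0, ∞] dominated by a single μ-integrable function H : X → [0, ∞] (i.e. h_n ≤ H for all n). Suppose the sequence of measures μ_n : S ↦ ∫_S h_n dμ converges weakly to a finite Borel measure μ_∞. Then μ_∞ is absolutely continuous with respect to μ. -/

import Mathlib

open MeasureTheory Filter Topology Set
open scoped ENNReal

/-- Let `X` be a metric space, `μ` a Borel measure on `X`, and `(h_n)`
a sequence of measurable functions `h_n : X → [0, ∞]` dominated by a single
`μ`-integrable function `H`. If the measures `μ_n : S ↦ ∫_S h_n dμ` converge weakly to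
a finite Borel measure `μ_∞`, then `μ_∞` is absolutely continuous w.r.t. `μ`. -/
theorem stmt_16 {X : Type*} [MetricSpace X] [MeasurableSpace X] [BorelSpace X]
    (μ : Measure X)
    (h : ℕ → X → ℝ≥0∞) (hmeas : ∀ n, Measurable (h n))
    (H : X → ℝ≥0∞) (hHmeas : Measurable H) (hHint : ∫⁻ x, H x ∂μ < ⊤)
    (hdom : ∀ n, h n ≤ H)
    (μlim : Measure X) [IsFiniteMeasure μlim]
    (hweak : ∀ g : BoundedContinuousFunction X ℝ,
      Tendsto (fun n : ℕ => ∫ x, g x ∂(μ.withDensity (h n))) atTop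
        (𝓝 (∫ x, g x ∂μlim))) :
    μlim ≪ μ := by
  -- the dominating finite measure ν = H·μ
  set ν : Measure X := μ.withDensity H with hν
  have hνfin : IsFiniteMeasure ν := by
    constructor
    rw [hν, withDensity_apply _ MeasurableSet.univ, Measure.restrict_univ]
    exact hHint
  -- each μₙ = hₙ·μ is a finite measure, dominated by ν
  have hfin : ∀ n, IsFiniteMeasure (μ.withDensity (h n)) := by
    intro n
    constructor
    rw [withDensity_apply _ MeasurableSet.univ, Measure.restrict_univ]
    exact lt_of_le_of_lt (lintegral_mono (hdom n)) hHint
  have hle : ∀ n, μ.withDensity (h n) ≤ ν := by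
    intro n
    exact withDensity_mono (ae_of_all μ (fun x => hdom n x))
  -- package into FiniteMeasures and obtain weak convergence
  let νs : ℕ → FiniteMeasure X := fun n => ⟨μ.withDensity (h n), hfin n⟩
  let νl : FiniteMeasure X := ⟨μlim, inferInstance⟩
  have htend : Tendsto νs atTop (𝓝 νl) :=
    FiniteMeasure.tendsto_iff_forall_integral_tendsto.mpr hweak
  -- masses converge
  have hmass : Tendsto (fun n => (μ.withDensity (h n)) univ) atTop (𝓝 (μlim univ)) := by
    have h1 := hweak 1
    simp only [BoundedContinuousFunction.coe_one, Pi.one_apply, integral_const, smul_eq_mul,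
      mul_one] at h1
    rw [← ENNReal.tendsto_toReal_iff (fun n => (measure_ne_top _ _)) (measure_ne_top _ _)]
    exact h1
  -- closed-set limsup inequality (portmanteau)
  have hclosed : ∀ F : Set X, IsClosed F →
      (atTop.limsup fun n => (μ.withDensity (h n)) F) ≤ μlim F := by
    intro F hF
    exact FiniteMeasure.limsup_measure_closed_le_of_tendsto htend hF
  -- main argument
  refine Measure.AbsolutelyContinuous.mk (fun s hs hs0 => ?_)
  have hνs : ν s = 0 := by
    rw [hν, withDensity_apply _ hs, Measure.restrict_eq_zero.mpr hs0, lintegral_zero_measure]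
  -- show μlim s ≤ ε for every ε > 0
  have key : ∀ ε : ℝ≥0∞, 0 < ε → μlim s ≤ ε := by
    intro ε hε
    -- outer regularity of the finite measure ν
    haveI := hνfin
    obtain ⟨U, hsU, hUopen, hUν⟩ : ∃ U, s ⊆ U ∧ IsOpen U ∧ ν U < ε := by
      rcases Set.exists_isOpen_lt_of_lt (μ := ν) s ε (by simpa [hνs] using hε) with
        ⟨U, hsU, hUo, hUlt⟩
      exact ⟨U, hsU, hUo, hUlt⟩
    set F := Uᶜ with hF
    have hFclosed : IsClosed F := hUopen.isClosed_compl
    -- each μₙ U ≤ ν U < ε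
    have hnU : ∀ n, (μ.withDensity (h n)) U ≤ ν U := fun n => hle n U
    -- mass splitting: μₙ univ ≤ μₙ F + ν U
    have hsplit : ∀ n, (μ.withDensity (h n)) univ ≤ (μ.withDensity (h n)) F + ν U := by
      intro n
      calc (μ.withDensity (h n)) univ = (μ.withDensity (h n)) (F ∪ U) := by
            rw [hF, compl_union_self]
        _ ≤ (μ.withDensity (h n)) F + (μ.withDensity (h n)) U := measure_union_le _ _
        _ ≤ (μ.withDensity (h n)) F + ν U := add_le_add_right (hnU n) _
    -- take limsup
    have hlim : μlim univ ≤ μlim F + ν U := by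
      have h1 : μlim univ = atTop.limsup (fun n => (μ.withDensity (h n)) univ) :=
        (hmass.limsup_eq).symm
      calc μlim univ = atTop.limsup (fun n => (μ.withDensity (h n)) univ) := h1
        _ ≤ atTop.limsup (fun n => (μ.withDensity (h n)) F + ν U) :=
            limsup_le_limsup (Eventually.of_forall hsplit)
        _ = atTop.limsup (fun n => (μ.withDensity (h n)) F) + ν U :=
            limsup_add_const atTop (fun n => (μ.withDensity (h n)) F) (ν U)
              ⟨⊤, Eventually.of_forall fun _ => le_top⟩ ⟨⊥, fun _ _ => bot_le⟩
        _ ≤ μlim F + ν U := add_le_add_left (hclosed F hFclosed) _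
    -- conclude μlim U ≤ ν U < ε
    have hUlim : μlim U ≤ ν U := by
      have hcompl := measure_compl (μ := μlim) (hUopen.measurableSet.compl) (measure_ne_top _ _)
      rw [compl_compl] at hcompl
      rw [hcompl]
      exact tsub_le_iff_left.mpr hlim
    exact le_trans (measure_mono hsU) (le_trans hUlim hUν.le)
  by_contra hne
  rcases (lt_or_ge 0 (μlim s)) with hpos | hle'
  · have := key (μlim s / 2) (ENNReal.half_pos (ne_of_gt hpos))
    have hhalf : μlim s / 2 < μlim s := ENNReal.half_lt_self (ne_of_gt hpos) (measure_ne_top _ _)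
    exact absurd this (not_le.mpr hhalf)
  · exact hne (le_antisymm hle' zero_le)
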